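/- For every real κ̃ ≥ 1 and all λ₁, λ₂ ∈ [0, 1], the inner product of the flag-register states satisfies ⟨h(λ₁), h(λ₂)⟩ ≥ 1 − ((6π² + 1)/24) · κ̃² · (λ₁ − λ₂)². -/

import Mathlib

/-- The filter function `f`: `f(λ) = 1/(2κ̃λ)` for `λ ≥ 1/κ̃`,
`f(λ) = -(1/2)cos(πκ̃λ)` for `1/(2κ̃) ≤ λ ≤ 1/κ̃`, and `f(λ) = 0` for `λ ≤ 1/(2κ̃)`. -/
noncomputable def ff (κ lam : ℝ) : ℝ :=
  if 1 / κ ≤ lam then 1 / (2 * κ * lam)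
  else if 1 / (2 * κ) ≤ lam then -(1 / 2) * Real.cos (Real.pi * κ * lam)
  else 0

/-- The filter function `g`: `g(λ) = 0` for `λ ≥ 1/κ̃`,
`g(λ) = (1/2)sin(πκ̃λ)` for `1/(2κ̃) ≤ λ ≤ 1/κ̃`, and `g(λ) = 1/2` for `λ ≤ 1/(2κ̃)`. -/
noncomputable def gg (κ lam : ℝ) : ℝ :=
  if 1 / κ ≤ lam then 0
  else if 1 / (2 * κ) ≤ lam then (1 / 2) * Real.sin (Real.pi * κ * lam)
  else 1 / 2

/-- The flag-register state `h(λ) = (f(λ), g(λ), √(1 - f(λ)² - g(λ)²))` as a vector in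
Euclidean `ℝ³`. -/
noncomputable def hvec (κ lam : ℝ) : EuclideanSpace ℝ (Fin 3) :=
  (WithLp.equiv 2 (Fin 3 → ℝ)).symm
    ![ff κ lam, gg κ lam, Real.sqrt (1 - ff κ lam ^ 2 - gg κ lam ^ 2)]

open scoped RealInnerProductSpace

lemma abs_cos_sub_cos_le (x y : ℝ) : |Real.cos x - Real.cos y| ≤ |x - y| := by
  rw [Real.cos_sub_cos]
  have h1 : |Real.sin ((x + y) / 2)| ≤ 1 := Real.abs_sin_le_one _
  have h2 : |Real.sin ((x - y) / 2)| ≤ |(x - y) / 2| := Real.abs_sin_le_abs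
  have h2' : |(x - y) / 2| = |x - y| / 2 := by rw [abs_div, abs_two]
  calc |(-2) * Real.sin ((x + y) / 2) * Real.sin ((x - y) / 2)|
      = 2 * |Real.sin ((x + y) / 2)| * |Real.sin ((x - y) / 2)| := by
        rw [abs_mul, abs_mul]; norm_num
    _ ≤ |x - y| := by
        rw [h2'] at h2
        nlinarith [abs_nonneg (Real.sin ((x + y) / 2)), abs_nonneg (Real.sin ((x - y) / 2)),
          abs_nonneg (x - y)]

lemma abs_sin_sub_sin_le (x y : ℝ) : |Real.sin x - Real.sin y| ≤ |x - y| := by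
  rw [Real.sin_sub_sin]
  have h1 : |Real.cos ((x + y) / 2)| ≤ 1 := Real.abs_cos_le_one _
  have h2 : |Real.sin ((x - y) / 2)| ≤ |(x - y) / 2| := Real.abs_sin_le_abs
  have h2' : |(x - y) / 2| = |x - y| / 2 := by rw [abs_div, abs_two]
  calc |2 * Real.sin ((x - y) / 2) * Real.cos ((x + y) / 2)|
      = 2 * |Real.sin ((x - y) / 2)| * |Real.cos ((x + y) / 2)| := by
        rw [abs_mul, abs_mul]; norm_num
    _ ≤ |x - y| := by
        rw [h2'] at h2
        nlinarith [abs_nonneg (Real.cos ((x + y) / 2)), abs_nonneg (Real.sin ((x - y) / 2)),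
          abs_nonneg (x - y)]

lemma cos_two_sided {x y : ℝ} (h : x ≤ y) :
    Real.cos x - Real.cos y ≤ y - x ∧ Real.cos y - Real.cos x ≤ y - x := by
  have h1 := abs_le.mp (abs_cos_sub_cos_le x y)
  rw [abs_of_nonpos (by linarith)] at h1
  exact ⟨by linarith [h1.2], by linarith [h1.1]⟩

lemma sin_two_sided {x y : ℝ} (h : x ≤ y) :
    Real.sin x - Real.sin y ≤ y - x ∧ Real.sin y - Real.sin x ≤ y - x := by
  have h1 := abs_le.mp (abs_sin_sub_sin_le x y)
  rw [abs_of_nonpos (by linarith)] at h1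
  exact ⟨by linarith [h1.2], by linarith [h1.1]⟩

lemma aux1 {κ x : ℝ} (hκ0 : 0 < κ) (h : 1/κ ≤ x) : 1 ≤ κ * x := by
  rw [div_le_iff₀ hκ0] at h; nlinarith

lemma aux1' {κ x : ℝ} (hκ0 : 0 < κ) (h : x < 1/κ) : κ * x < 1 := by
  rw [lt_div_iff₀ hκ0] at h; nlinarith

lemma aux2 {κ x : ℝ} (hκ0 : 0 < κ) (h : 1/(2*κ) ≤ x) : 1/2 ≤ κ * x := by
  rw [div_le_iff₀ (by positivity)] at h; nlinarith

lemma aux2' {κ x : ℝ} (hκ0 : 0 < κ) (h : x < 1/(2*κ)) : κ * x < 1/2 := by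
  rw [lt_div_iff₀ (by positivity)] at h; nlinarith

set_option maxHeartbeats 1000000 in
lemma ff_lip {κ : ℝ} (hκ : 1 ≤ κ) {a b : ℝ} (hab : a ≤ b) :
    |ff κ a - ff κ b| ≤ Real.pi * κ / 2 * (b - a) := by
  have hκ0 : (0:ℝ) < κ := by linarith
  have hπ : (3:ℝ) < Real.pi := Real.pi_gt_three
  unfold ff
  rcases le_or_gt (1/κ) a with ha1 | ha1
  · -- a in III hence b in III
    have hb1 : 1/κ ≤ b := le_trans ha1 hab
    have ha0 : 0 < a := lt_of_lt_of_le (by positivity) ha1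
    have hb0 : 0 < b := lt_of_lt_of_le (by positivity) hb1
    have hka : 1 ≤ κ * a := aux1 hκ0 ha1
    have hkb : 1 ≤ κ * b := aux1 hκ0 hb1
    rw [if_pos ha1, if_pos hb1]
    have e : 1/(2*κ*a) - 1/(2*κ*b) = (b - a)/(2*κ*a*b) := by field_simp
    rw [abs_of_nonneg (by rw [e]; exact div_nonneg (by linarith) (by positivity)), e,
      div_le_iff₀ (by positivity)]
    have hp : 1 ≤ Real.pi * κ^2 * a * b := by
      nlinarith [mul_le_mul hka hkb (by linarith) (by linarith)]
    nlinarith [mul_le_mul_of_nonneg_right hp (sub_nonneg.2 hab)]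
  · rcases le_or_gt (1/(2*κ)) a with ha2 | ha2
    · -- a in II
      have hka1 : κ * a < 1 := aux1' hκ0 ha1
      have hka2 : 1/2 ≤ κ * a := aux2 hκ0 ha2
      rcases le_or_gt (1/κ) b with hb1 | hb1
      · -- b in III
        have hb0 : 0 < b := lt_of_lt_of_le (by positivity) hb1
        have hkb : 1 ≤ κ * b := aux1 hκ0 hb1
        rw [if_neg (not_le.2 ha1), if_pos ha2, if_pos hb1]
        have hc := cos_two_sided (show Real.pi * κ * a ≤ Real.pi by
          nlinarith [mul_pos Real.pi_pos (sub_pos.2 hka1)])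
        rw [Real.cos_pi] at hc
        have e : 1/2 - 1/(2*κ*b) = (κ*b - 1)/(2*κ*b) := by field_simp
        have e2 : κ/2*(b - 1/κ) = (κ*b - 1)/2 := by field_simp
        have h2 : 1/2 - 1/(2*κ*b) ≤ (κ*b - 1)/2 := by
          rw [e, div_le_div_iff₀ (by positivity) (by norm_num)]
          nlinarith
        have h2' : 0 ≤ 1/2 - 1/(2*κ*b) := by
          rw [e]; exact div_nonneg (by linarith) (by positivity)
        have hprod : 0 ≤ (Real.pi - 1) * (κ*b - 1) :=
          mul_nonneg (by linarith) (by linarith)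
        rw [abs_le]
        constructor <;> nlinarith [hc.1, hc.2, hprod]
      · -- b in II
        have hb2 : 1/(2*κ) ≤ b := le_trans ha2 hab
        rw [if_neg (not_le.2 ha1), if_pos ha2, if_neg (not_le.2 hb1), if_pos hb2]
        have hc := cos_two_sided (show Real.pi * κ * a ≤ Real.pi * κ * b by
          nlinarith [mul_nonneg (mul_nonneg Real.pi_pos.le hκ0.le) (sub_nonneg.2 hab)])
        rw [abs_le]
        constructor <;> nlinarith [hc.1, hc.2]
    · -- a in I
      have hka : κ * a < 1/2 := aux2' hκ0 ha2
      rcases le_or_gt (1/κ) b with hb1 | hb1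
      · -- b in III
        have hb0 : 0 < b := lt_of_lt_of_le (by positivity) hb1
        have hkb : 1 ≤ κ * b := aux1 hκ0 hb1
        rw [if_neg (not_le.2 ha1), if_neg (not_le.2 ha2), if_pos hb1]
        have hfb : 1/(2*κ*b) ≤ 1/2 := by
          rw [div_le_div_iff₀ (by positivity) (by norm_num)]; linarith
        have hfb0 : (0:ℝ) < 1/(2*κ*b) := by positivity
        have hgap : 1/(2*κ) ≤ b - a := by
          have e : (1:ℝ)/(2*κ) = 1/κ - 1/(2*κ) := by field_simp; ring
          rw [e]; linarith
        have hmul : Real.pi * κ / 2 * (1/(2*κ)) ≤ Real.pi * κ / 2 * (b - a) := by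
          apply mul_le_mul_of_nonneg_left hgap (by positivity)
        have e3 : Real.pi * κ / 2 * (1/(2*κ)) = Real.pi / 4 := by field_simp; ring
        rw [e3] at hmul
        rw [abs_le]
        constructor <;> linarith
      · rcases le_or_gt (1/(2*κ)) b with hb2 | hb2
        · -- a in I, b in II
          have hkb2 : 1/2 ≤ κ * b := aux2 hκ0 hb2
          rw [if_neg (not_le.2 ha1), if_neg (not_le.2 ha2), if_neg (not_le.2 hb1), if_pos hb2]
          have hc := cos_two_sided (show Real.pi / 2 ≤ Real.pi * κ * b by
            nlinarith [mul_nonneg Real.pi_pos.le (by linarith : (0:ℝ) ≤ κ * b - 1/2)])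
          rw [Real.cos_pi_div_two] at hc
          have hprod : 0 ≤ Real.pi * (1/2 - κ*a) :=
            mul_nonneg (by linarith) (by linarith)
          rw [abs_le]
          constructor <;> nlinarith [hc.1, hc.2, hprod]
        · -- both in I
          rw [if_neg (not_le.2 ha1), if_neg (not_le.2 ha2), if_neg (not_le.2 hb1),
            if_neg (not_le.2 hb2)]
          simp only [sub_self, abs_zero]
          exact mul_nonneg (by positivity) (by linarith)

set_option maxHeartbeats 1000000 in
lemma gg_lip {κ : ℝ} (hκ : 1 ≤ κ) {a b : ℝ} (hab : a ≤ b) :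
    |gg κ a - gg κ b| ≤ Real.pi * κ / 2 * (b - a) := by
  have hκ0 : (0:ℝ) < κ := by linarith
  have hπ : (3:ℝ) < Real.pi := Real.pi_gt_three
  unfold gg
  rcases le_or_gt (1/κ) a with ha1 | ha1
  · have hb1 : 1/κ ≤ b := le_trans ha1 hab
    rw [if_pos ha1, if_pos hb1]
    simp only [sub_self, abs_zero]
    exact mul_nonneg (by positivity) (by linarith)
  · rcases le_or_gt (1/(2*κ)) a with ha2 | ha2
    · -- a in II
      have hka1 : κ * a < 1 := aux1' hκ0 ha1
      have hka2 : 1/2 ≤ κ * a := aux2 hκ0 ha2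
      rcases le_or_gt (1/κ) b with hb1 | hb1
      · -- b in III
        have hkb : 1 ≤ κ * b := aux1 hκ0 hb1
        rw [if_neg (not_le.2 ha1), if_pos ha2, if_pos hb1]
        have hc := sin_two_sided (show Real.pi * κ * a ≤ Real.pi by
          nlinarith [mul_pos Real.pi_pos (sub_pos.2 hka1)])
        rw [Real.sin_pi] at hc
        have hprod : 0 ≤ Real.pi * (κ*b - 1) := mul_nonneg (by linarith) (by linarith)
        rw [abs_le]
        constructor <;> nlinarith [hc.1, hc.2, hprod]
      · -- b in II
        have hb2 : 1/(2*κ) ≤ b := le_trans ha2 hab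
        rw [if_neg (not_le.2 ha1), if_pos ha2, if_neg (not_le.2 hb1), if_pos hb2]
        have hc := sin_two_sided (show Real.pi * κ * a ≤ Real.pi * κ * b by
          nlinarith [mul_nonneg (mul_nonneg Real.pi_pos.le hκ0.le) (sub_nonneg.2 hab)])
        rw [abs_le]
        constructor <;> nlinarith [hc.1, hc.2]
    · -- a in I
      have hka : κ * a < 1/2 := aux2' hκ0 ha2
      rcases le_or_gt (1/κ) b with hb1 | hb1
      · -- b in III
        have hkb : 1 ≤ κ * b := aux1 hκ0 hb1
        rw [if_neg (not_le.2 ha1), if_neg (not_le.2 ha2), if_pos hb1]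
        have hgap : 1/(2*κ) ≤ b - a := by
          have e : (1:ℝ)/(2*κ) = 1/κ - 1/(2*κ) := by field_simp; ring
          rw [e]; linarith
        have hmul : Real.pi * κ / 2 * (1/(2*κ)) ≤ Real.pi * κ / 2 * (b - a) := by
          apply mul_le_mul_of_nonneg_left hgap (by positivity)
        have e3 : Real.pi * κ / 2 * (1/(2*κ)) = Real.pi / 4 := by field_simp; ring
        rw [e3] at hmul
        rw [abs_le]
        constructor <;> linarith
      · rcases le_or_gt (1/(2*κ)) b with hb2 | hb2
        · -- a in I, b in II
          have hkb2 : 1/2 ≤ κ * b := aux2 hκ0 hb2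
          rw [if_neg (not_le.2 ha1), if_neg (not_le.2 ha2), if_neg (not_le.2 hb1), if_pos hb2]
          have hc := sin_two_sided (show Real.pi / 2 ≤ Real.pi * κ * b by
            nlinarith [mul_nonneg Real.pi_pos.le (by linarith : (0:ℝ) ≤ κ * b - 1/2)])
          rw [Real.sin_pi_div_two] at hc
          have hprod : 0 ≤ Real.pi * (1/2 - κ*a) :=
            mul_nonneg (by linarith) (by linarith)
          rw [abs_le]
          constructor <;> nlinarith [hc.1, hc.2, hprod]
        · rw [if_neg (not_le.2 ha1), if_neg (not_le.2 ha2), if_neg (not_le.2 hb1),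
            if_neg (not_le.2 hb2)]
          simp only [sub_self, abs_zero]
          exact mul_nonneg (by positivity) (by linarith)

lemma sq_add_sq_eq {κ lam : ℝ} (hκ : 1 ≤ κ) :
    ff κ lam ^ 2 + gg κ lam ^ 2 =
      if 1/κ ≤ lam then 1/(4*(κ*lam)^2) else 1/4 := by
  have hκ0 : (0:ℝ) < κ := by linarith
  unfold ff gg
  rcases le_or_gt (1/κ) lam with h1 | h1
  · rw [if_pos h1, if_pos h1, if_pos h1]
    have hl : 0 < lam := lt_of_lt_of_le (by positivity) h1
    field_simp
    ring
  · rw [if_neg (not_le.2 h1), if_neg (not_le.2 h1), if_neg (not_le.2 h1)]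
    rcases le_or_gt (1/(2*κ)) lam with h2 | h2
    · rw [if_pos h2, if_pos h2]
      have := Real.sin_sq_add_cos_sq (Real.pi * κ * lam)
      nlinarith
    · rw [if_neg (not_le.2 h2), if_neg (not_le.2 h2)]
      norm_num

lemma sq_add_sq_le {κ lam : ℝ} (hκ : 1 ≤ κ) :
    ff κ lam ^ 2 + gg κ lam ^ 2 ≤ 1/4 := by
  have hκ0 : (0:ℝ) < κ := by linarith
  rw [sq_add_sq_eq hκ]
  split_ifs with h1
  · have hl : 0 < lam := lt_of_lt_of_le (by positivity) h1
    have hkl : 1 ≤ κ * lam := aux1 hκ0 h1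
    rw [div_le_div_iff₀ (by positivity) (by norm_num)]
    nlinarith
  · exact le_refl _

set_option maxHeartbeats 1000000 in
lemma FF_lip {κ : ℝ} (hκ : 1 ≤ κ) {a b : ℝ} (hab : a ≤ b) :
    |(ff κ a ^ 2 + gg κ a ^ 2) - (ff κ b ^ 2 + gg κ b ^ 2)| ≤ κ/2 * (b - a) := by
  have hκ0 : (0:ℝ) < κ := by linarith
  rw [sq_add_sq_eq hκ, sq_add_sq_eq hκ]
  rcases le_or_gt (1/κ) a with ha1 | ha1
  · have hb1 : 1/κ ≤ b := le_trans ha1 hab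
    have ha0 : 0 < a := lt_of_lt_of_le (by positivity) ha1
    have hb0 : 0 < b := lt_of_lt_of_le (by positivity) hb1
    have hka : 1 ≤ κ * a := aux1 hκ0 ha1
    have hkb : 1 ≤ κ * b := aux1 hκ0 hb1
    have hkab : κ * a ≤ κ * b := by nlinarith
    rw [if_pos ha1, if_pos hb1]
    have e : 1/(4*(κ*a)^2) - 1/(4*(κ*b)^2) = ((κ*b)^2 - (κ*a)^2)/(4*(κ*a)^2*(κ*b)^2) := by
      field_simp
    rw [abs_of_nonneg (by rw [e]; exact div_nonneg (by nlinarith) (by positivity)), e,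
      div_le_iff₀ (by positivity)]
    -- need (κb)² - (κa)² ≤ κ/2 (b-a) * 4 (κa)²(κb)²
    have hu : 1 ≤ (κ*a)*(κ*b) := by nlinarith
    have hv : (κ*b) + (κ*a) ≤ 2*((κ*a)*(κ*b))*((κ*a)*(κ*b)) := by nlinarith
    nlinarith [mul_le_mul_of_nonneg_right hv (sub_nonneg.2 hkab),
      mul_nonneg (sub_nonneg.2 hkab) (by positivity : (0:ℝ) ≤ (κ*a)*(κ*b))]
  · rcases le_or_gt (1/κ) b with hb1 | hb1
    · have hb0 : 0 < b := lt_of_lt_of_le (by positivity) hb1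
      have hkb : 1 ≤ κ * b := aux1 hκ0 hb1
      have hka : κ * a < 1 := aux1' hκ0 ha1
      rw [if_neg (not_le.2 ha1), if_pos hb1]
      have e : 1/4 - 1/(4*(κ*b)^2) = ((κ*b)^2 - 1)/(4*(κ*b)^2) := by
        field_simp
      have hnn : (0:ℝ) ≤ 1/4 - 1/(4*(κ*b)^2) := by
        rw [e]; exact div_nonneg (by nlinarith) (by positivity)
      rw [abs_of_nonneg hnn, e, div_le_iff₀ (by positivity)]
      have hkba : κ*b - 1 ≤ κ*(b - a) := by nlinarith
      have hv2 : (κ*b) ≤ (κ*b)^2 := by nlinarith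
      have hv : (κ*b)^2 - 1 ≤ (κ*b - 1) * (2*(κ*b)^2) := by nlinarith
      nlinarith [mul_le_mul_of_nonneg_right hkba (by positivity : (0:ℝ) ≤ 2*(κ*b)^2)]
    · rw [if_neg (not_le.2 ha1), if_neg (not_le.2 hb1)]
      simp only [sub_self, abs_zero]
      exact mul_nonneg (by positivity) (by linarith)

set_option maxHeartbeats 1000000 in
theorem stmt_15 (κ : ℝ) (hκ : 1 ≤ κ) (lam₁ lam₂ : ℝ)
    (h₁ : lam₁ ∈ Set.Icc (0 : ℝ) 1) (h₂ : lam₂ ∈ Set.Icc (0 : ℝ) 1) :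
    1 - (6 * Real.pi ^ 2 + 1) / 24 * κ ^ 2 * (lam₁ - lam₂) ^ 2 ≤
      ⟪hvec κ lam₁, hvec κ lam₂⟫ := by
  have hκ0 : (0:ℝ) < κ := by linarith
  have hπ : (0:ℝ) < Real.pi := Real.pi_pos
  set f1 := ff κ lam₁ with hf1
  set f2 := ff κ lam₂ with hf2
  set g1 := gg κ lam₁ with hg1
  set g2 := gg κ lam₂ with hg2
  set s1 := Real.sqrt (1 - f1 ^ 2 - g1 ^ 2) with hs1
  set s2 := Real.sqrt (1 - f2 ^ 2 - g2 ^ 2) with hs2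
  have hFa : f1 ^ 2 + g1 ^ 2 ≤ 1/4 := sq_add_sq_le hκ
  have hFb : f2 ^ 2 + g2 ^ 2 ≤ 1/4 := sq_add_sq_le hκ
  have hs1sq : s1 ^ 2 = 1 - f1 ^ 2 - g1 ^ 2 := Real.sq_sqrt (by linarith)
  have hs2sq : s2 ^ 2 = 1 - f2 ^ 2 - g2 ^ 2 := Real.sq_sqrt (by linarith)
  have h34 : Real.sqrt (3/4) = Real.sqrt 3 / 2 := by
    rw [show (3:ℝ)/4 = (Real.sqrt 3 / 2)^2 by
      rw [div_pow, Real.sq_sqrt (by norm_num : (0:ℝ) ≤ 3)]; norm_num,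
      Real.sqrt_sq (by positivity)]
  have hs1lb : Real.sqrt 3 / 2 ≤ s1 := by
    rw [hs1, ← h34]; exact Real.sqrt_le_sqrt (by linarith)
  have hs2lb : Real.sqrt 3 / 2 ≤ s2 := by
    rw [hs2, ← h34]; exact Real.sqrt_le_sqrt (by linarith)
  have hsqrt3 : Real.sqrt 3 ^ 2 = 3 := Real.sq_sqrt (by norm_num)
  have hsqrt3pos : 0 < Real.sqrt 3 := Real.sqrt_pos.2 (by norm_num)
  have key : ∀ a b : ℝ, a ≤ b →
      (ff κ a - ff κ b)^2 ≤ Real.pi^2 * κ^2 / 4 * (a - b)^2 ∧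
      (gg κ a - gg κ b)^2 ≤ Real.pi^2 * κ^2 / 4 * (a - b)^2 ∧
      ((ff κ a ^ 2 + gg κ a ^ 2) - (ff κ b ^ 2 + gg κ b ^ 2))^2 ≤ κ^2/4 * (a - b)^2 := by
    intro a b hab
    have h1 := ff_lip hκ hab
    have h2 := gg_lip hκ hab
    have h3 := FF_lip hκ hab
    refine ⟨?_, ?_, ?_⟩
    · calc (ff κ a - ff κ b)^2 = |ff κ a - ff κ b|^2 := (sq_abs _).symm
        _ ≤ (Real.pi * κ / 2 * (b - a))^2 := pow_le_pow_left₀ (abs_nonneg _) h1 2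
        _ = Real.pi^2 * κ^2 / 4 * (a - b)^2 := by ring
    · calc (gg κ a - gg κ b)^2 = |gg κ a - gg κ b|^2 := (sq_abs _).symm
        _ ≤ (Real.pi * κ / 2 * (b - a))^2 := pow_le_pow_left₀ (abs_nonneg _) h2 2
        _ = Real.pi^2 * κ^2 / 4 * (a - b)^2 := by ring
    · calc ((ff κ a ^ 2 + gg κ a ^ 2) - (ff κ b ^ 2 + gg κ b ^ 2))^2
          = |(ff κ a ^ 2 + gg κ a ^ 2) - (ff κ b ^ 2 + gg κ b ^ 2)|^2 := (sq_abs _).symm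
        _ ≤ (κ/2 * (b - a))^2 := pow_le_pow_left₀ (abs_nonneg _) h3 2
        _ = κ^2/4 * (a - b)^2 := by ring
  have hsym : (f1 - f2)^2 ≤ Real.pi^2 * κ^2 / 4 * (lam₁ - lam₂)^2 ∧
      (g1 - g2)^2 ≤ Real.pi^2 * κ^2 / 4 * (lam₁ - lam₂)^2 ∧
      ((f1^2 + g1^2) - (f2^2 + g2^2))^2 ≤ κ^2/4 * (lam₁ - lam₂)^2 := by
    rcases le_total lam₁ lam₂ with h | h
    · exact key lam₁ lam₂ h
    · obtain ⟨k1, k2, k3⟩ := key lam₂ lam₁ h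
      refine ⟨?_, ?_, ?_⟩
      · calc (f1 - f2)^2 = (ff κ lam₂ - ff κ lam₁)^2 := by unfold f1 f2; ring
          _ ≤ Real.pi^2 * κ^2 / 4 * (lam₂ - lam₁)^2 := k1
          _ = Real.pi^2 * κ^2 / 4 * (lam₁ - lam₂)^2 := by ring
      · calc (g1 - g2)^2 = (gg κ lam₂ - gg κ lam₁)^2 := by unfold g1 g2; ring
          _ ≤ Real.pi^2 * κ^2 / 4 * (lam₂ - lam₁)^2 := k2
          _ = Real.pi^2 * κ^2 / 4 * (lam₁ - lam₂)^2 := by ring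
      · calc ((f1^2 + g1^2) - (f2^2 + g2^2))^2
            = ((ff κ lam₂ ^ 2 + gg κ lam₂ ^ 2) - (ff κ lam₁ ^ 2 + gg κ lam₁ ^ 2))^2 := by
              unfold f1 f2 g1 g2; ring
          _ ≤ κ^2/4 * (lam₂ - lam₁)^2 := k3
          _ = κ^2/4 * (lam₁ - lam₂)^2 := by ring
  obtain ⟨hfsq, hgsq, hFsq⟩ := hsym
  have hssq : (s1 - s2)^2 ≤ κ^2/12 * (lam₁ - lam₂)^2 := by
    have hdiff : (s1 - s2) * (s1 + s2) = (f2^2 + g2^2) - (f1^2 + g1^2) := by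
      have e : (s1 - s2) * (s1 + s2) = s1^2 - s2^2 := by ring
      rw [e, hs1sq, hs2sq]; ring
    have hsum : Real.sqrt 3 ≤ s1 + s2 := by linarith
    have h1 : (s1 - s2)^2 * (s1 + s2)^2 = ((f1^2 + g1^2) - (f2^2 + g2^2))^2 := by
      rw [← mul_pow, hdiff]; ring
    have h3 : 3 ≤ (s1 + s2)^2 := by nlinarith [hsum, hsqrt3, hsqrt3pos]
    have h4 := mul_le_mul_of_nonneg_left h3 (sq_nonneg (s1 - s2))
    linarith [h1, hFsq, h4]
  have hinner : ⟪hvec κ lam₁, hvec κ lam₂⟫ = f1*f2 + g1*g2 + s1*s2 := by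
    simp [hvec, PiLp.inner_apply, Fin.sum_univ_three, RCLike.inner_apply,
      ← hf1, ← hf2, ← hg1, ← hg2, ← hs1, ← hs2]
    ring
  rw [hinner]
  nlinarith [hfsq, hgsq, hssq, hs1sq, hs2sq, sq_nonneg (lam₁ - lam₂)]
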